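/- With the same setup and α ≥ 2, the Tsallis free energy dissipation rate satisfies −dF_α/dt ≥ (u_α/(MN)^(α−1))·Σ_j |Σ_{i≠j}(p_i q_ij − p_j q_ji)|^α, where u_α > 0 is the constant from the Leindler-type inequality. -/

import Mathlib

open Finset

lemma tsallis_holder_aux {ι : Type*} (s : Finset ι) (w g : ι → ℝ) (hw : ∀ i, 0 ≤ w i)
    {α : ℝ} (hα : 1 < α) :
    |∑ i ∈ s, w i * g i| ^ α ≤ (∑ i ∈ s, w i) ^ (α - 1) * ∑ i ∈ s, w i * |g i| ^ α := by
  have hα0 : (0:ℝ) < α := by linarith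
  have habs : |∑ i ∈ s, w i * g i| ≤ ∑ i ∈ s, w i * |g i| := by
    refine (Finset.abs_sum_le_sum_abs _ _).trans ?_
    exact Finset.sum_le_sum fun i _ => by rw [abs_mul, abs_of_nonneg (hw i)]
  have h1 : |∑ i ∈ s, w i * g i| ^ α ≤ (∑ i ∈ s, w i * |g i|) ^ α :=
    Real.rpow_le_rpow (abs_nonneg _) habs hα0.le
  have h2 := Real.inner_le_weight_mul_Lp_of_nonneg s hα.le w (fun i => |g i|) hw
    (fun i => abs_nonneg _)
  have hWnn : 0 ≤ ∑ i ∈ s, w i := Finset.sum_nonneg fun i _ => hw i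
  have hTnn : 0 ≤ ∑ i ∈ s, w i * |g i| ^ α :=
    Finset.sum_nonneg fun i _ => mul_nonneg (hw i) (Real.rpow_nonneg (abs_nonneg _) _)
  have h3 : (∑ i ∈ s, w i * |g i|) ^ α ≤
      ((∑ i ∈ s, w i) ^ (1 - α⁻¹) * (∑ i ∈ s, w i * |g i| ^ α) ^ α⁻¹) ^ α :=
    Real.rpow_le_rpow (Finset.sum_nonneg fun i _ => mul_nonneg (hw i) (abs_nonneg _)) h2 hα0.le
  refine (h1.trans h3).trans_eq ?_
  rw [Real.mul_rpow (Real.rpow_nonneg hWnn _) (Real.rpow_nonneg hTnn _),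
    ← Real.rpow_mul hWnn, ← Real.rpow_mul hTnn,
    show (1 - α⁻¹) * α = α - 1 by rw [sub_mul, one_mul, inv_mul_cancel₀ hα0.ne'],
    inv_mul_cancel₀ hα0.ne', Real.rpow_one]

theorem tsallis_dissipation_lower_bound_ge_two (N : ℕ) (q : Fin N → Fin N → ℝ)
    (μ : Fin N → ℝ) (M α u : ℝ) (p : ℝ → Fin N → ℝ)
    (hq : ∀ i j, i ≠ j → 0 ≤ q i j)
    (hqrow : ∀ i, ∑ j, q i j = 0)
    (hirr : ∀ i j : Fin N, i ≠ j → ∃ (m : ℕ) (c : Fin (m + 1) → Fin N),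
      c 0 = i ∧ c (Fin.last m) = j ∧ ∀ k : Fin m, 0 < q (c k.castSucc) (c k.succ))
    (hμpos : ∀ i, 0 < μ i) (hμ1 : ∑ i, μ i = 1)
    (hstat : ∀ j, ∑ i, μ i * q i j = 0)
    (hM : ∀ i j, i ≠ j → q i j ≤ M) (hMpos : 0 < M)
    (hα : 2 ≤ α) (hu : 0 < u)
    (huIneq : ∀ z : ℝ, -1 ≤ z →
      (1 / (α * (α - 1))) * ((z + 1) ^ α - 1 - α * z) ≥ u * |z| ^ α)
    (hderiv : ∀ i t, HasDerivAt (fun s => p s i) (∑ j, p t j * q j i) t)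
    (hppos : ∀ t i, 0 < p t i) (hpsum : ∀ t, ∑ i, p t i = 1) :
    ∀ t D, HasDerivAt (fun s =>
        (1 / (α * (α - 1))) * ((∑ i, p s i * (p s i / μ i) ^ (α - 1)) - 1)) D t →
      -D ≥ (u / (M * N) ^ (α - 1)) *
        ∑ j, |∑ i ∈ Finset.univ.erase j, (p t i * q i j - p t j * q j i)| ^ α := by
  intro t D hD
  rcases Nat.eq_zero_or_pos N with hN | hN
  · exfalso
    have h := hpsum t
    rw [show (Finset.univ : Finset (Fin N)) = ∅ by subst hN; rfl] at h
    simp at h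
  have hα1 : (1:ℝ) < α := lt_of_lt_of_le one_lt_two hα
  have hα0 : (0:ℝ) < α := by linarith
  have hαm1 : (0:ℝ) < α - 1 := by linarith
  set f : Fin N → ℝ := fun i => p t i / μ i with hfdef
  have hfpos : ∀ i, 0 < f i := fun i => div_pos (hppos t i) (hμpos i)
  have hpf : ∀ i, p t i = μ i * f i := by
    intro i
    have hμi := (hμpos i).ne'
    rw [hfdef]
    field_simp
  -- Step A : value of the derivative
  have hDi : ∀ i, HasDerivAt (fun s => p s i * (p s i / μ i) ^ (α - 1))
      (α * f i ^ (α - 1) * (∑ j, p t j * q j i)) t := by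
    intro i
    have hμi := (hμpos i).ne'
    have h1 : HasDerivAt (fun s => p s i / μ i) ((∑ j, p t j * q j i) / μ i) t :=
      (hderiv i t).div_const _
    have h2 := h1.rpow_const (p := α) (Or.inl (hfpos i).ne')
    have h3 := h2.const_mul (μ i)
    have heq : (fun s => p s i * (p s i / μ i) ^ (α - 1))
        = fun s => μ i * (p s i / μ i) ^ α := by
      funext s
      have hp0 : (0:ℝ) < p s i / μ i := div_pos (hppos s i) (hμpos i)
      have e : (p s i / μ i) ^ α = (p s i / μ i) ^ (α - 1) * (p s i / μ i) ^ (1:ℝ) := by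
        rw [← Real.rpow_add hp0]; norm_num
      rw [e, Real.rpow_one]
      field_simp
    rw [heq]
    convert h3 using 1
    · rfl
    · rfl
    field_simp
    ring
  have hD0 : HasDerivAt (fun s =>
      (1 / (α * (α - 1))) * ((∑ i, p s i * (p s i / μ i) ^ (α - 1)) - 1))
      ((1 / (α * (α - 1))) * ∑ i, α * f i ^ (α - 1) * (∑ j, p t j * q j i)) t := by
    exact ((HasDerivAt.fun_sum (fun i _ => hDi i)).sub_const 1).const_mul _
  have hDval : D = (1 / (α * (α - 1))) * ∑ i, α * f i ^ (α - 1) * (∑ j, p t j * q j i) :=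
    hD.unique hD0
  -- convexity integrand
  set c : Fin N → Fin N → ℝ := fun i j =>
    (1 / (α * (α - 1))) * (f j ^ α - f i ^ α - α * f i ^ (α - 1) * (f j - f i)) with hcdef
  -- Step B : -D = ∑∑ μ_j q_ji c i j
  have hS : ∑ i, ∑ j, μ j * q j i * c i j = -D := by
    have per_i : ∀ i, ∑ j, μ j * q j i * c i j
        = (1 / (α * (α - 1))) * (∑ j, (μ j * f j ^ α) * q j i)
          - (1 / (α * (α - 1))) * (α * f i ^ (α - 1) * ∑ j, p t j * q j i) := by
      intro i
      have h0 : ∑ j, μ j * q j i = 0 := hstat i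
      have expand : ∀ j, μ j * q j i * c i j
          = (1 / (α * (α - 1))) * ((μ j * f j ^ α) * q j i)
            - (1 / (α * (α - 1))) * (α * f i ^ (α - 1) * (p t j * q j i))
            + ((1 / (α * (α - 1))) * (α * f i ^ (α - 1) * f i - f i ^ α))
              * (μ j * q j i) := by
        intro j
        rw [hcdef, hpf j]
        ring
      rw [Finset.sum_congr rfl (fun j _ => expand j)]
      rw [Finset.sum_add_distrib, Finset.sum_sub_distrib]
      have hC0 : ∑ x, ((1 / (α * (α - 1))) * (α * f i ^ (α - 1) * f i - f i ^ α))
          * (μ x * q x i) = 0 := by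
        rw [← Finset.mul_sum, h0, mul_zero]
      rw [hC0, add_zero]
      simp only [← Finset.mul_sum]
    rw [Finset.sum_congr rfl (fun i _ => per_i i), Finset.sum_sub_distrib, hDval]
    have hzero : ∑ i, (1 / (α * (α - 1))) * (∑ j, (μ j * f j ^ α) * q j i) = 0 := by
      rw [← Finset.mul_sum, Finset.sum_comm]
      have inner0 : ∑ j : Fin N, ∑ i : Fin N, (μ j * f j ^ α) * q j i = 0 :=
        Finset.sum_eq_zero fun j _ => by rw [← Finset.mul_sum, hqrow j, mul_zero]
      rw [inner0, mul_zero]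
    rw [hzero, zero_sub, ← Finset.mul_sum]
  -- Step C : termwise lower bound
  have hC : ∀ i j, u * (μ j * q j i * |f j - f i| ^ α) ≤ μ j * q j i * c i j := by
    intro i j
    rcases eq_or_ne i j with rfl | hij
    · have h1 : c i i = 0 := by rw [hcdef]; ring
      have h2 : |f i - f i| ^ α = 0 := by
        rw [sub_self, abs_zero, Real.zero_rpow hα0.ne']
      rw [h1, h2]
      simp
    · have hw : 0 ≤ μ j * q j i := mul_nonneg (hμpos j).le (hq j i (fun h => hij h.symm))
      have hcore : u * |f j - f i| ^ α ≤ c i j := by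
        set z : ℝ := f j / f i - 1 with hzdef
        have hz : -1 ≤ z := by
          have : 0 ≤ f j / f i := (div_pos (hfpos j) (hfpos i)).le
          rw [hzdef]; linarith
        have h := huIneq z hz
        have hfi : 0 < f i ^ α := Real.rpow_pos_of_pos (hfpos i) α
        have h2 := mul_le_mul_of_nonneg_right h hfi.le
        have hz2 : z = (f j - f i) / f i := by
          rw [hzdef, sub_div, div_self (hfpos i).ne']
        have e1 : u * |z| ^ α * f i ^ α = u * |f j - f i| ^ α := by
          rw [hz2, abs_div, abs_of_pos (hfpos i),
            Real.div_rpow (abs_nonneg _) (hfpos i).le, mul_assoc,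
            div_mul_cancel₀ _ hfi.ne']
        have e2 : (z + 1) ^ α = f j ^ α / f i ^ α := by
          rw [show z + 1 = f j / f i by rw [hzdef]; ring,
            Real.div_rpow (hfpos j).le (hfpos i).le]
        have e3 : f i ^ (α - 1) = f i ^ α / f i := by
          rw [Real.rpow_sub (hfpos i), Real.rpow_one]
        have e4 : (1 / (α * (α - 1))) * ((z + 1) ^ α - 1 - α * z) * f i ^ α = c i j := by
          simp only [hcdef]
          rw [e2, hz2, e3]
          have h5 : f i ≠ 0 := (hfpos i).ne'
          have h6 : α * (α - 1) ≠ 0 := by positivity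
          field_simp
        rw [e1, e4] at h2
        exact h2
      calc u * (μ j * q j i * |f j - f i| ^ α)
          = (μ j * q j i) * (u * |f j - f i| ^ α) := by ring
        _ ≤ (μ j * q j i) * c i j := mul_le_mul_of_nonneg_left hcore hw
  -- assemble: u * T ≤ -D
  have hT : u * (∑ i, ∑ j, μ j * q j i * |f j - f i| ^ α) ≤ -D := by
    rw [← hS, Finset.mul_sum]
    refine Finset.sum_le_sum fun i _ => ?_
    rw [Finset.mul_sum]
    exact Finset.sum_le_sum fun j _ => hC i j
  -- Step D : Hölder per column
  have hMN1 : (0:ℝ) < (M * N) ^ (α - 1) := by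
    apply Real.rpow_pos_of_pos
    have : (0:ℝ) < (N:ℝ) := by exact_mod_cast hN
    positivity
  have hJ : ∀ j, |∑ i ∈ Finset.univ.erase j, (p t i * q i j - p t j * q j i)| ^ α
      ≤ (M * N) ^ (α - 1) * ∑ i, μ i * q i j * |f i - f j| ^ α := by
    intro j
    set w : Fin N → ℝ := fun i => if i = j then 0 else μ i * q i j with hwdef
    have hwnn : ∀ i, 0 ≤ w i := by
      intro i
      rw [hwdef]
      by_cases h : i = j
      · simp [h]
      · simp only [h, if_false]
        exact mul_nonneg (hμpos i).le (hq i j h)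
    have hweq : ∀ i ∈ Finset.univ.erase j, w i = μ i * q i j := by
      intro i hi
      simp only [hwdef]
      rw [if_neg (Finset.mem_erase.1 hi).1]
    -- rewrite the flux
    have h1 : ∑ i ∈ Finset.univ.erase j, q j i = -q j j := by
      have ha := hqrow j
      have h2 := Finset.add_sum_erase Finset.univ (fun i => q j i) (Finset.mem_univ j)
      linarith [h2 ▸ ha]
    have h3 : ∑ i ∈ Finset.univ.erase j, μ i * q i j = -(μ j * q j j) := by
      have ha := hstat j
      have h4 := Finset.add_sum_erase Finset.univ (fun i => μ i * q i j)
        (Finset.mem_univ j)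
      linarith [h4 ▸ ha]
    have hJeq : ∑ i ∈ Finset.univ.erase j, (p t i * q i j - p t j * q j i)
        = ∑ i ∈ Finset.univ.erase j, w i * (f i - f j) := by
      have lhs1 : ∑ i ∈ Finset.univ.erase j, (p t i * q i j - p t j * q j i)
          = (∑ i ∈ Finset.univ.erase j, w i * f i)
            - p t j * ∑ i ∈ Finset.univ.erase j, q j i := by
        rw [Finset.sum_sub_distrib, Finset.mul_sum]
        congr 1
        refine Finset.sum_congr rfl fun i hi => ?_
        rw [hweq i hi, hpf i]
        ring
      have rhs1 : ∑ i ∈ Finset.univ.erase j, w i * (f i - f j)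
          = (∑ i ∈ Finset.univ.erase j, w i * f i)
            - (∑ i ∈ Finset.univ.erase j, w i) * f j := by
        simp only [mul_sub]
        rw [Finset.sum_sub_distrib, Finset.sum_mul]
      have hw3 : ∑ i ∈ Finset.univ.erase j, w i = -(μ j * q j j) := by
        rw [Finset.sum_congr rfl hweq]
        exact h3
      rw [lhs1, rhs1, h1, hw3, hpf j]
      ring
    rw [hJeq]
    have hH := tsallis_holder_aux (Finset.univ.erase j) w (fun i => f i - f j) hwnn hα1
    refine hH.trans ?_
    have hWle : ∑ i ∈ Finset.univ.erase j, w i ≤ M * N := by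
      have hb1 : ∑ i ∈ Finset.univ.erase j, w i ≤ ∑ i ∈ Finset.univ.erase j, μ i * M := by
        refine Finset.sum_le_sum fun i hi => ?_
        rw [hweq i hi]
        exact mul_le_mul_of_nonneg_left (hM i j (Finset.mem_erase.1 hi).1) (hμpos i).le
      have hb2 : ∑ i ∈ Finset.univ.erase j, μ i * M ≤ M := by
        rw [← Finset.sum_mul]
        have hb3 : ∑ i ∈ Finset.univ.erase j, μ i ≤ 1 := by
          rw [← hμ1]
          exact Finset.sum_le_sum_of_subset_of_nonneg (Finset.erase_subset _ _)
            (fun i _ _ => (hμpos i).le)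
        nlinarith
      have hb4 : M ≤ M * N := by
        have : (1:ℝ) ≤ (N:ℝ) := by exact_mod_cast hN
        nlinarith
      linarith
    have hTj0 : 0 ≤ ∑ i ∈ Finset.univ.erase j, w i * |f i - f j| ^ α :=
      Finset.sum_nonneg fun i _ =>
        mul_nonneg (hwnn i) (Real.rpow_nonneg (abs_nonneg _) _)
    have hWpow : (∑ i ∈ Finset.univ.erase j, w i) ^ (α - 1) ≤ (M * N) ^ (α - 1) :=
      Real.rpow_le_rpow (Finset.sum_nonneg fun i _ => hwnn i) hWle hαm1.le
    have hTjeq : ∑ i ∈ Finset.univ.erase j, w i * |f i - f j| ^ α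
        = ∑ i, μ i * q i j * |f i - f j| ^ α := by
      rw [Finset.sum_congr rfl (fun i hi => by rw [hweq i hi])]
      refine Finset.sum_erase _ ?_
      rw [sub_self, abs_zero, Real.zero_rpow hα0.ne', mul_zero]
    rw [← hTjeq]
    exact mul_le_mul_of_nonneg_right hWpow hTj0
  -- Step E : combine
  have hsum : ∑ j, |∑ i ∈ Finset.univ.erase j, (p t i * q i j - p t j * q j i)| ^ α
      ≤ (M * N) ^ (α - 1) * ∑ j, ∑ i, μ i * q i j * |f i - f j| ^ α := by
    rw [Finset.mul_sum]
    exact Finset.sum_le_sum fun j _ => hJ j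
  have hswap : ∑ j, ∑ i, μ i * q i j * |f i - f j| ^ α
      = ∑ i, ∑ j, μ j * q j i * |f j - f i| ^ α := rfl
  rw [ge_iff_le]
  calc (u / (M * N) ^ (α - 1)) *
        ∑ j, |∑ i ∈ Finset.univ.erase j, (p t i * q i j - p t j * q j i)| ^ α
      ≤ (u / (M * N) ^ (α - 1)) *
        ((M * N) ^ (α - 1) * ∑ j, ∑ i, μ i * q i j * |f i - f j| ^ α) :=
        mul_le_mul_of_nonneg_left hsum (div_nonneg hu.le hMN1.le)
    _ = u * ∑ i, ∑ j, μ j * q j i * |f j - f i| ^ α := by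
        rw [hswap]
        field_simp
    _ ≤ -D := hT
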